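/- Let λ ∈ (0, 1/2), β ≥ 0, γ > 0, and T > 0. (a) The singular initial value problem μ(0) = 0, μ′(s) = γ²/((2λ+1)·μ(s)) + β for s ∈ (0, T], has a unique solution μ⁰ : [0, T] → [0, ∞) that is continuous on [0, T], strictly increasing, positive on (0, T], and differentiable on (0, T]. (b) For each ε > 0, let μ_ε : [0, T] → ℝ be the unique solution of μ_ε(0) = ε, μ_ε′(s) = ε·μ_ε(s) + γ²·(1+ε)^{2λ+2}/((2λ+1)·μ_ε(s)) + ε + β on [0, T]. Then for all 0 < ε₁ ≤ ε₂ and all s ∈ [0, T] one has μ_{ε₁}(s) ≤ μ_{ε₂}(s), and for every s ∈ [0, T], μ_ε(s) → μ⁰(s) as ε → 0⁺. -/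

import Mathlib

open Set Filter intervalIntegral Topology


lemma compLemma {T L : ℝ} {f g F G : ℝ → ℝ} (hL : 0 ≤ L)
    (hf : ContinuousOn f (Icc 0 T)) (hg : ContinuousOn g (Icc 0 T))
    (hfd : ∀ s ∈ Ioo 0 T, HasDerivAt f (F s) s)
    (hgd : ∀ s ∈ Ioo 0 T, HasDerivAt g (G s) s)
    (h0 : f 0 ≤ g 0)
    (hcmp : ∀ s ∈ Ioo 0 T, g s < f s → F s - G s ≤ L * (f s - g s)) :
    ∀ s ∈ Icc 0 T, f s ≤ g s := by
  by_contra hcon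
  push_neg at hcon
  obtain ⟨s0, hs0, hlt⟩ := hcon
  set A : Set ℝ := {s | s ∈ Icc 0 s0 ∧ f s ≤ g s} with hA
  have hIcc : Icc 0 s0 ⊆ Icc 0 T := Icc_subset_Icc le_rfl hs0.2
  have h0A : (0:ℝ) ∈ A := ⟨⟨le_rfl, hs0.1⟩, h0⟩
  have hbdd : BddAbove A := ⟨s0, fun x hx => hx.1.2⟩
  have hclosed : IsClosed A := by
    have heq : A = Icc 0 s0 ∩ (fun s => f s - g s) ⁻¹' Iic 0 := by
      ext x; simp [hA, sub_nonpos]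
    rw [heq]
    exact ContinuousOn.preimage_isClosed_of_isClosed
      ((hf.mono hIcc).sub (hg.mono hIcc)) isClosed_Icc isClosed_Iic
  set s1 := sSup A with hs1
  have hs1A : s1 ∈ A := hclosed.csSup_mem ⟨0, h0A⟩ hbdd
  have hs1le : s1 ≤ s0 := csSup_le ⟨0, h0A⟩ fun x hx => hx.1.2
  have hs1lt : s1 < s0 := lt_of_le_of_ne hs1le (by
    intro hh; rw [hh] at hs1A; exact absurd hs1A.2 (not_le.2 hlt))
  have hgap : ∀ s ∈ Ioc s1 s0, g s < f s := by
    intro s hs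
    by_contra hle
    push_neg at hle
    exact absurd (le_csSup hbdd ⟨⟨hs1A.1.1.trans hs.1.le, hs.2⟩, hle⟩) (not_le.2 hs.1)
  -- h := (f - g) * exp (-L * ·) is antitone on [s1, s0]
  set h : ℝ → ℝ := fun s => (f s - g s) * Real.exp (-L * s) with hh
  have hs1mem : s1 ∈ Icc 0 T := hIcc hs1A.1
  have hsub : Icc s1 s0 ⊆ Icc 0 T := Icc_subset_Icc hs1mem.1 hs0.2
  have hconth : ContinuousOn h (Icc s1 s0) :=
    (((hf.mono hsub).sub (hg.mono hsub)).mul (Real.continuous_exp.comp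
      (continuous_const.mul continuous_id)).continuousOn)
  have hIooIoo : Ioo s1 s0 ⊆ Ioo 0 T := fun x hx =>
    ⟨lt_of_le_of_lt hs1mem.1 hx.1, lt_of_lt_of_le hx.2 hs0.2⟩
  have hderiv : ∀ s ∈ Ioo s1 s0,
      HasDerivAt h ((F s - G s - L * (f s - g s)) * Real.exp (-L * s)) s := by
    intro s hs
    have h1 : HasDerivAt (fun s => f s - g s) (F s - G s) s :=
      (hfd s (hIooIoo hs)).sub (hgd s (hIooIoo hs))
    have h2 : HasDerivAt (fun s => Real.exp (-L * s)) (Real.exp (-L * s) * (-L)) s := by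
      simpa using (((hasDerivAt_id s).const_mul (-L)).exp)
    have := h1.mul h2
    exact this.congr_deriv (by ring)
  have hanti : AntitoneOn h (Icc s1 s0) := by
    apply antitoneOn_of_deriv_nonpos (convex_Icc _ _) hconth
    · intro x hx
      rw [interior_Icc] at hx
      exact ((hderiv x hx).differentiableAt).differentiableWithinAt
    · intro x hx
      rw [interior_Icc] at hx
      rw [(hderiv x hx).deriv]
      have hcx := hcmp x (hIooIoo hx) (hgap x ⟨hx.1, hx.2.le⟩)
      have : F x - G x - L * (f x - g x) ≤ 0 := by linarith
      exact mul_nonpos_of_nonpos_of_nonneg this (Real.exp_pos _).le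
  have h10 : h s0 ≤ h s1 := hanti ⟨le_rfl, hs1lt.le⟩ ⟨hs1lt.le, le_rfl⟩ hs1lt.le
  have hpos : 0 < h s0 := mul_pos (by linarith) (Real.exp_pos _)
  have hle0 : h s1 ≤ 0 := mul_nonpos_of_nonpos_of_nonneg (by linarith [hs1A.2]) (Real.exp_pos _).le
  linarith


lemma exists_singular_aux {c β T : ℝ} (hc : 0 < c) (hβ : 0 ≤ β) (hT : 0 < T) :
    ∃ μ : ℝ → ℝ, ContinuousOn μ (Icc 0 T) ∧ StrictMonoOn μ (Icc 0 T) ∧ μ 0 = 0 ∧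
      (∀ s ∈ Icc 0 T, 0 ≤ μ s) ∧ (∀ s ∈ Ioc 0 T, 0 < μ s) ∧
      ∀ s ∈ Ioc 0 T, HasDerivAt μ (c / μ s + β) s := by
  classical
  set φ : ℝ → ℝ := fun x => x / (c + β * x) with hφ
  set S : ℝ → ℝ := fun u => ∫ x in (0:ℝ)..u, φ x with hS
  set b : ℝ := max c (2 * (T + 1) * (1 + β)) with hb
  have hbpos : 0 < b := lt_max_of_lt_left hc
  have hbc : c ≤ b := le_max_left _ _
  have hden : ∀ x : ℝ, 0 ≤ x → 0 < c + β * x := fun x hx => by positivity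
  have hφcont : ∀ u : ℝ, 0 ≤ u → ContinuousOn φ (Icc 0 u) := by
    intro u hu
    apply ContinuousOn.div continuousOn_id (by fun_prop)
    intro x hx; exact (hden x hx.1).ne'
  have hmeas : Measurable φ := Measurable.div measurable_id (by fun_prop)
  have hSderiv : ∀ u : ℝ, 0 ≤ u → HasDerivAt S (φ u) u := by
    intro u hu
    apply integral_hasDerivAt_right
    · exact ((hφcont u hu).mono (by rw [uIcc_of_le hu])).intervalIntegrable
    · exact ⟨univ, univ_mem, (hmeas.stronglyMeasurable).aestronglyMeasurable⟩
    · exact ContinuousAt.div continuousAt_id (by fun_prop) (hden u hu).ne'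
  have hScont : ContinuousOn S (Icc 0 b) := fun u hu =>
    ((hSderiv u hu.1).continuousAt).continuousWithinAt
  have hS0 : S 0 = 0 := integral_same
  have hSmono : StrictMonoOn S (Icc 0 b) := by
    apply strictMonoOn_of_deriv_pos (convex_Icc _ _) hScont
    intro x hx
    rw [interior_Icc] at hx
    rw [(hSderiv x hx.1.le).deriv]
    exact div_pos hx.1 (hden x hx.1.le)
  -- lower bound : S b ≥ T + 1
  have hSb : T + 1 ≤ S b := by
    have hint1 : IntervalIntegrable φ MeasureTheory.volume 0 b :=
      ((hφcont b hbpos.le).mono (by rw [uIcc_of_le hbpos.le])).intervalIntegrable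
    have hint2 : IntervalIntegrable (fun x => x / (b * (1 + β))) MeasureTheory.volume 0 b := by
      apply ContinuousOn.intervalIntegrable; fun_prop
    have hmono : ∀ x ∈ Icc (0:ℝ) b, x / (b * (1 + β)) ≤ φ x := by
      intro x hx
      apply div_le_div_of_nonneg_left hx.1 (hden x hx.1)
      nlinarith [hx.1, hx.2, hβ, hbpos]
    have hle : (∫ x in (0:ℝ)..b, x / (b * (1 + β))) ≤ S b := by
      apply intervalIntegral.integral_mono_on hbpos.le hint2 hint1
      intro x hx; exact hmono x hx
    have hval : (∫ x in (0:ℝ)..b, x / (b * (1 + β))) = b / (2 * (1 + β)) := by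
      rw [intervalIntegral.integral_div, integral_id]
      field_simp
      ring
    have hbig : T + 1 ≤ b / (2 * (1 + β)) := by
      rw [le_div_iff₀ (by positivity)]
      calc (T + 1) * (2 * (1 + β)) = 2 * (T + 1) * (1 + β) := by ring
      _ ≤ b := le_max_right _ _
    linarith
  -- the inverse function
  have hsurj : ∀ s ∈ Icc 0 (T + 1), ∃ u ∈ Icc 0 b, S u = s := by
    intro s hs
    have := intermediate_value_Icc hbpos.le hScont
    rw [hS0] at this
    obtain ⟨u, hu, hSu⟩ := this ⟨hs.1, hs.2.trans hSb⟩
    exact ⟨u, hu, hSu⟩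
  choose! μ hmem heq using hsurj
  have hinj := hSmono.injOn
  have hzero : (0:ℝ) ∈ Icc 0 (T+1) := ⟨le_rfl, by linarith⟩
  have hμ0 : μ 0 = 0 := by
    apply hinj (hmem 0 hzero) ⟨le_rfl, hbpos.le⟩
    rw [heq 0 hzero, hS0]
  have hmono : StrictMonoOn μ (Icc 0 (T+1)) := by
    intro x hx y hy hxy
    by_contra hle
    push_neg at hle
    have := hSmono.monotoneOn (hmem y hy) (hmem x hx) hle
    rw [heq x hx, heq y hy] at this
    exact absurd hxy (not_lt.2 this)
  have hpos : ∀ s ∈ Ioc 0 (T+1), 0 < μ s := by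
    intro s hs
    have : μ 0 < μ s := hmono hzero ⟨hs.1.le, hs.2⟩ hs.1
    rwa [hμ0] at this
  -- surjectivity of μ onto [0, μ (T+1)]
  have hμsurj : ∀ v ∈ Icc 0 (μ (T+1)), ∃ s ∈ Icc 0 (T+1), μ s = v := by
    intro v hv
    have hTmem : (T+1:ℝ) ∈ Icc 0 (T+1) := ⟨by linarith, le_rfl⟩
    have hvb : v ∈ Icc 0 b := ⟨hv.1, hv.2.trans (hmem _ hTmem).2⟩
    refine ⟨S v, ⟨?_, ?_⟩, ?_⟩
    · rw [← hS0]; exact hSmono.monotoneOn ⟨le_rfl, hbpos.le⟩ hvb hv.1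
    · rw [← heq _ hTmem]; exact hSmono.monotoneOn hvb (hmem _ hTmem) hv.2
    · have hSv : S v ∈ Icc 0 (T+1) := by
        constructor
        · rw [← hS0]; exact hSmono.monotoneOn ⟨le_rfl, hbpos.le⟩ hvb hv.1
        · rw [← heq _ hTmem]; exact hSmono.monotoneOn hvb (hmem _ hTmem) hv.2
      exact hinj (hmem _ hSv) hvb (heq _ hSv)
  -- continuity of μ on Icc 0 (T+1)
  have hcont : ContinuousOn μ (Icc 0 (T+1)) := by
    have hright : ∀ s ∈ Ico (0:ℝ) (T+1), ContinuousWithinAt μ (Ici s) s := by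
      intro s hs
      apply StrictMonoOn.continuousWithinAt_right_of_exists_between hmono
      · exact mem_of_superset (Icc_mem_nhdsGE_of_mem ⟨le_rfl, hs.2⟩)
          (Icc_subset_Icc hs.1 le_rfl)
      · intro v hv
        have hTmem : (T+1:ℝ) ∈ Icc 0 (T+1) := ⟨by linarith, le_rfl⟩
        have hsT : μ s < μ (T+1) := hmono ⟨hs.1, hs.2.le⟩ hTmem hs.2
        have hμs0 : 0 ≤ μ s := (hmem s ⟨hs.1, hs.2.le⟩).1
        obtain ⟨cc, hcc, hccv⟩ := hμsurj (min v (μ (T+1)))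
          ⟨le_min (hμs0.trans (le_of_lt hv)) (hμs0.trans hsT.le), min_le_right _ _⟩
        exact ⟨cc, hcc, by rw [hccv]; exact ⟨lt_min hv hsT, min_le_left _ _⟩⟩
    have hleft : ∀ s ∈ Ioc (0:ℝ) (T+1), ContinuousWithinAt μ (Iic s) s := by
      intro s hs
      apply StrictMonoOn.continuousWithinAt_left_of_exists_between hmono
      · exact mem_of_superset (Icc_mem_nhdsLE_of_mem ⟨hs.1, le_rfl⟩)
          (Icc_subset_Icc le_rfl hs.2)
      · intro v hv
        have hTmem : (T+1:ℝ) ∈ Icc 0 (T+1) := ⟨by linarith, le_rfl⟩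
        have hμs : 0 < μ s := hpos s hs
        have hsT : μ s ≤ μ (T+1) := hmono.monotoneOn ⟨hs.1.le, hs.2⟩ hTmem hs.2
        obtain ⟨cc, hcc, hccv⟩ := hμsurj (max v 0)
          ⟨le_max_right _ _, max_le (hv.le.trans hsT) (hμs.le.trans hsT)⟩
        exact ⟨cc, hcc, by rw [hccv]; exact ⟨le_max_left _ _, max_lt hv hμs⟩⟩
    intro s hs
    rcases eq_or_lt_of_le hs.1 with h0 | h0
    · exact (hright s ⟨hs.1, by rw [← h0]; linarith⟩).mono
        (fun x hx => by simp only [mem_Ici, ← h0]; exact hx.1)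
    rcases eq_or_lt_of_le hs.2 with h1 | h1
    · exact (hleft s ⟨h0, hs.2⟩).mono (fun x hx => by simp only [mem_Iic, h1]; exact hx.2)
    · have := (hleft s ⟨h0, hs.2⟩).union (hright s ⟨hs.1, h1⟩)
      rw [Iic_union_Ici] at this
      exact this.mono (subset_univ _)
  -- derivative
  have hderiv : ∀ s ∈ Ioc 0 T, HasDerivAt μ (c / μ s + β) s := by
    intro s hs
    have hsmem : s ∈ Icc 0 (T+1) := ⟨hs.1.le, by linarith [hs.2]⟩
    have hsioo : s ∈ Ioo 0 (T+1) := ⟨hs.1, by linarith [hs.2]⟩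
    have hnbhd : Icc 0 (T+1) ∈ 𝓝 s := Icc_mem_nhds hsioo.1 hsioo.2
    have hu : 0 < μ s := hpos s ⟨hs.1, hsmem.2⟩
    have hSd : HasDerivAt S (φ (μ s)) (μ s) := hSderiv _ hu.le
    have hφne : φ (μ s) ≠ 0 := ne_of_gt (div_pos hu (hden _ hu.le))
    have hca : ContinuousAt μ s := hcont.continuousAt hnbhd
    have hinv : ∀ᶠ y in 𝓝 s, S (μ y) = y :=
      eventually_of_mem hnbhd fun y hy => heq y hy
    have := HasDerivAt.of_local_left_inverse hca hSd hφne hinv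
    refine this.congr_deriv ?_
    rw [hφ]
    field_simp
  exact ⟨μ, hcont.mono (Icc_subset_Icc le_rfl (by linarith)),
    hmono.mono (Icc_subset_Icc le_rfl (by linarith)), hμ0,
    fun s hs => (hmem s ⟨hs.1, by linarith [hs.2]⟩).1,
    fun s hs => hpos s ⟨hs.1, by linarith [hs.2]⟩, hderiv⟩



/-- A solution of the singular initial value problem (4.14):
`μ(0) = 0`, `μ′(s) = γ²/((2λ+1)·μ(s)) + β` on `(0, T]`, with `μ` continuous on `[0,T]`,
strictly increasing, nonnegative, and positive on `(0, T]`. -/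
def IsSingularSol (lam β γ T : ℝ) (μ : ℝ → ℝ) : Prop :=
  ContinuousOn μ (Set.Icc 0 T) ∧ StrictMonoOn μ (Set.Icc 0 T) ∧ μ 0 = 0 ∧
    (∀ s ∈ Set.Icc 0 T, 0 ≤ μ s) ∧ (∀ s ∈ Set.Ioc 0 T, 0 < μ s) ∧
    ∀ s ∈ Set.Ioc 0 T,
      HasDerivWithinAt μ (γ ^ 2 / ((2 * lam + 1) * μ s) + β) (Set.Icc 0 T) s

/-- A solution of the initial value problem (4.12) with initial value `ε`:
`μ(0) = ε`, `μ′(s) = ε·μ(s) + γ²(1+ε)^{2λ+2}/((2λ+1)·μ(s)) + ε + β` on `[0, T]`. -/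
def IsEpsSol (lam β γ T ε : ℝ) (μ : ℝ → ℝ) : Prop :=
  μ 0 = ε ∧ (∀ s ∈ Set.Icc 0 T, 0 < μ s) ∧
    ∀ s ∈ Set.Icc 0 T,
      HasDerivWithinAt μ
        (ε * μ s + γ ^ 2 * (1 + ε) ^ (2 * lam + 2) / ((2 * lam + 1) * μ s) + ε + β)
        (Set.Icc 0 T) s


/-- ODEs (4.12)/(4.14): (a) the singular IVP has a solution `μ⁰`, unique on `[0,T]`;
(b) the solutions `μ_ε` of the `ε`-IVPs are monotone in `ε` and converge pointwise on
`[0,T]` to `μ⁰` as `ε → 0⁺`. -/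
theorem stmt_16 (lam β γ T : ℝ) (hlam : lam ∈ Set.Ioo (0 : ℝ) (1 / 2))
    (hβ : 0 ≤ β) (hγ : 0 < γ) (hT : 0 < T) :
    (∃ μ0 : ℝ → ℝ, IsSingularSol lam β γ T μ0) ∧
    (∀ μ1 μ2 : ℝ → ℝ, IsSingularSol lam β γ T μ1 → IsSingularSol lam β γ T μ2 →
      Set.EqOn μ1 μ2 (Set.Icc 0 T)) ∧
    (∀ ε₁ ε₂ : ℝ, ∀ μ1 μ2 : ℝ → ℝ, 0 < ε₁ → ε₁ ≤ ε₂ →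
      IsEpsSol lam β γ T ε₁ μ1 → IsEpsSol lam β γ T ε₂ μ2 →
      ∀ s ∈ Set.Icc 0 T, μ1 s ≤ μ2 s) ∧
    (∀ μ0 : ℝ → ℝ, IsSingularSol lam β γ T μ0 →
      ∀ μf : ℝ → ℝ → ℝ, (∀ ε : ℝ, 0 < ε → IsEpsSol lam β γ T ε (μf ε)) →
      ∀ s ∈ Set.Icc 0 T,
        Filter.Tendsto (fun ε => μf ε s) (nhdsWithin 0 (Set.Ioi 0)) (nhds (μ0 s))) := by
  obtain ⟨hlam0, hlam2⟩ := hlam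
  have hk : (0:ℝ) < 2 * lam + 1 := by linarith
  have hc : (0:ℝ) < γ ^ 2 / (2 * lam + 1) := by positivity
  -- helpers to get HasDerivAt at interior points
  have hSingDeriv : ∀ μ : ℝ → ℝ, IsSingularSol lam β γ T μ → ∀ s ∈ Ioo 0 T,
      HasDerivAt μ (γ ^ 2 / ((2 * lam + 1) * μ s) + β) s := by
    intro μ hμ s hs
    exact (hμ.2.2.2.2.2 s ⟨hs.1, hs.2.le⟩).hasDerivAt (Icc_mem_nhds hs.1 hs.2)
  have hEpsDeriv : ∀ ε : ℝ, ∀ μ : ℝ → ℝ, IsEpsSol lam β γ T ε μ → ∀ s ∈ Ioo 0 T,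
      HasDerivAt μ (ε * μ s + γ ^ 2 * (1 + ε) ^ (2 * lam + 2) / ((2 * lam + 1) * μ s) + ε + β) s := by
    intro ε μ hμ s hs
    exact (hμ.2.2 s ⟨hs.1.le, hs.2.le⟩).hasDerivAt (Icc_mem_nhds hs.1 hs.2)
  have hEpsCont : ∀ ε : ℝ, ∀ μ : ℝ → ℝ, IsEpsSol lam β γ T ε μ → ContinuousOn μ (Icc 0 T) :=
    fun ε μ hμ s hs => (hμ.2.2 s hs).continuousWithinAt
  refine ⟨?_, ?_, ?_, ?_⟩
  · -- existence
    obtain ⟨μ, h1, h2, h3, h4, h5, h6⟩ := exists_singular_aux hc hβ hT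
    refine ⟨μ, h1, h2, h3, h4, h5, fun s hs => ?_⟩
    have := (h6 s hs).hasDerivWithinAt (s := Icc 0 T)
    rwa [div_div] at this
  · -- uniqueness
    have key : ∀ μ1 μ2 : ℝ → ℝ, IsSingularSol lam β γ T μ1 → IsSingularSol lam β γ T μ2 →
        ∀ s ∈ Icc 0 T, μ1 s ≤ μ2 s := by
      intro μ1 μ2 h1 h2
      apply compLemma (L := 0) le_rfl h1.1 h2.1 (hSingDeriv μ1 h1) (hSingDeriv μ2 h2)
        (by rw [h1.2.2.1, h2.2.2.1])
      intro s hs hlt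
      have p1 : 0 < μ1 s := h1.2.2.2.2.1 s ⟨hs.1, hs.2.le⟩
      have p2 : 0 < μ2 s := h2.2.2.2.2.1 s ⟨hs.1, hs.2.le⟩
      have : γ ^ 2 / ((2 * lam + 1) * μ1 s) ≤ γ ^ 2 / ((2 * lam + 1) * μ2 s) :=
        div_le_div_of_nonneg_left (sq_nonneg γ) (mul_pos hk p2)
          (mul_le_mul_of_nonneg_left hlt.le hk.le)
      linarith
    intro μ1 μ2 h1 h2 s hs
    exact le_antisymm (key μ1 μ2 h1 h2 s hs) (key μ2 μ1 h2 h1 s hs)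
  · -- monotonicity in ε
    intro ε₁ ε₂ μ1 μ2 hε₁ hε₁₂ h1 h2
    apply compLemma (L := ε₂) (by linarith) (hEpsCont _ _ h1) (hEpsCont _ _ h2)
      (hEpsDeriv _ _ h1) (hEpsDeriv _ _ h2) (by rw [h1.1, h2.1]; exact hε₁₂)
    intro s hs hlt
    have p1 : 0 < μ1 s := h1.2.1 s ⟨hs.1.le, hs.2.le⟩
    have p2 : 0 < μ2 s := h2.2.1 s ⟨hs.1.le, hs.2.le⟩
    have hnum : γ ^ 2 * (1 + ε₁) ^ (2 * lam + 2) ≤ γ ^ 2 * (1 + ε₂) ^ (2 * lam + 2) := by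
      have := Real.rpow_le_rpow (by linarith) (by linarith : 1 + ε₁ ≤ 1 + ε₂)
        (by linarith : (0:ℝ) ≤ 2 * lam + 2)
      nlinarith [sq_nonneg γ]
    have hdiv : γ ^ 2 * (1 + ε₁) ^ (2 * lam + 2) / ((2 * lam + 1) * μ1 s) ≤
        γ ^ 2 * (1 + ε₂) ^ (2 * lam + 2) / ((2 * lam + 1) * μ2 s) :=
      div_le_div₀ (mul_nonneg (sq_nonneg γ) (Real.rpow_nonneg (by linarith) _)) hnum
        (mul_pos hk p2) (mul_le_mul_of_nonneg_left hlt.le hk.le)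
    have h11 : ε₁ * μ1 s ≤ ε₂ * μ1 s := by nlinarith
    linarith
  · -- convergence
    intro μ0 hμ0 μf hμf s hs
    -- lower bound
    have hlow : ∀ ε : ℝ, 0 < ε → ∀ t ∈ Icc 0 T, μ0 t ≤ μf ε t := by
      intro ε hε
      have hf := hμf ε hε
      apply compLemma (L := 0) le_rfl hμ0.1 (hEpsCont _ _ hf)
        (hSingDeriv μ0 hμ0) (hEpsDeriv _ _ hf)
        (by rw [hμ0.2.2.1, hf.1]; exact hε.le)
      intro t ht hlt
      have p2 : 0 < μf ε t := hf.2.1 t ⟨ht.1.le, ht.2.le⟩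
      have p1 : 0 < μ0 t := lt_trans p2 hlt
      have hone : (1:ℝ) ≤ (1 + ε) ^ (2 * lam + 2) :=
        Real.one_le_rpow (by linarith) (by linarith)
      have hd1 : γ ^ 2 / ((2 * lam + 1) * μ0 t) ≤ γ ^ 2 / ((2 * lam + 1) * μf ε t) :=
        div_le_div_of_nonneg_left (sq_nonneg γ) (mul_pos hk p2)
          (mul_le_mul_of_nonneg_left hlt.le hk.le)
      have hd2 : γ ^ 2 / ((2 * lam + 1) * μf ε t) ≤
          γ ^ 2 * (1 + ε) ^ (2 * lam + 2) / ((2 * lam + 1) * μf ε t) := by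
        apply div_le_div_of_nonneg_right _ (mul_pos hk p2).le
        nlinarith [sq_nonneg γ]
      have hem : 0 ≤ ε * μf ε t := mul_nonneg hε.le p2.le
      linarith
    -- upper bound
    have hupp : ∀ ε : ℝ, 0 < ε → ∀ t ∈ Icc 0 T,
        μf ε t ≤ Real.exp (ε * t) * ((1 + ε) ^ (lam + 1) * μ0 t + ε + ε * t) := by
      intro ε hε
      set k₁ : ℝ := (1 + ε) ^ (lam + 1) with hk₁def
      have hεpos : (0:ℝ) < 1 + ε := by linarith
      have hk₁ : 1 ≤ k₁ := Real.one_le_rpow (by linarith) (by linarith)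
      set ν : ℝ → ℝ := fun t => Real.exp (ε * t) * (k₁ * μ0 t + ε + ε * t) with hν
      have hf := hμf ε hε
      have hνd : ∀ t ∈ Ioo 0 T, HasDerivAt ν
          (ε * ν t + Real.exp (ε * t) * (k₁ * (γ ^ 2 / ((2 * lam + 1) * μ0 t) + β) + ε)) t := by
        intro t ht
        have hE : HasDerivAt (fun t => Real.exp (ε * t)) (Real.exp (ε * t) * ε) t := by
          simpa using (((hasDerivAt_id t).const_mul ε).exp)
        have hw : HasDerivAt (fun t => k₁ * μ0 t + ε + ε * t)
            (k₁ * (γ ^ 2 / ((2 * lam + 1) * μ0 t) + β) + ε) t := by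
          have := ((hSingDeriv μ0 hμ0 t ht).const_mul k₁).add_const ε
          exact (this.add (((hasDerivAt_id t).const_mul ε))).congr_deriv (by ring)
        have := hE.mul hw
        exact this.congr_deriv (by simp only [hν]; ring)
      have hνcont : ContinuousOn ν (Icc 0 T) := by
        apply ContinuousOn.mul (by fun_prop)
        exact ((hμ0.1.const_smul k₁).add continuousOn_const).add (by fun_prop)
      apply compLemma (L := ε) hε.le (hEpsCont _ _ hf) hνcont (hEpsDeriv _ _ hf) hνd
      · rw [hf.1]
        simp [hν, hμ0.2.2.1, Real.exp_zero]
      · intro t ht hlt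
        have hm : 0 < μf ε t := hf.2.1 t ⟨ht.1.le, ht.2.le⟩
        have hu : 0 < μ0 t := hμ0.2.2.2.2.1 t ⟨ht.1, ht.2.le⟩
        set E : ℝ := Real.exp (ε * t) with hE
        have hE1 : 1 ≤ E := Real.one_le_exp (by nlinarith [ht.1])
        have hεt : 0 ≤ ε * t := by nlinarith [ht.1]
        have hνlb : E * (k₁ * μ0 t) ≤ ν t := by
          have hνt : ν t = E * (k₁ * μ0 t + ε + ε * t) := rfl
          rw [hνt]
          nlinarith [Real.exp_pos (ε * t)]
        have hK : γ ^ 2 * (1 + ε) ^ (2 * lam + 2) = γ ^ 2 * (k₁ * k₁) := by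
          rw [hk₁def, ← Real.rpow_add hεpos]
          congr 2
          ring
        -- main division chain
        have hchain : γ ^ 2 * (k₁ * k₁) / ((2 * lam + 1) * μf ε t) ≤
            E * (k₁ * (γ ^ 2 / ((2 * lam + 1) * μ0 t))) := by
          have hk₁pos : 0 < k₁ := lt_of_lt_of_le one_pos hk₁
          have hEpos : 0 < E := Real.exp_pos _
          have step1 : γ ^ 2 * (k₁ * k₁) / ((2 * lam + 1) * μf ε t) ≤
              γ ^ 2 * (k₁ * k₁) / ((2 * lam + 1) * (E * (k₁ * μ0 t))) := by
            apply div_le_div_of_nonneg_left (by positivity)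
              (by positivity)
            apply mul_le_mul_of_nonneg_left _ hk.le
            linarith
          have step2 : γ ^ 2 * (k₁ * k₁) / ((2 * lam + 1) * (E * (k₁ * μ0 t))) =
              (γ ^ 2 * k₁ / ((2 * lam + 1) * μ0 t)) * (1 / E) := by
            field_simp
          have step3 : (γ ^ 2 * k₁ / ((2 * lam + 1) * μ0 t)) * (1 / E) ≤
              (γ ^ 2 * k₁ / ((2 * lam + 1) * μ0 t)) * E := by
            apply mul_le_mul_of_nonneg_left _ (by positivity)
            calc 1 / E ≤ 1 := by
                  rw [div_le_one (by linarith)]; exact hE1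
            _ ≤ E := hE1
          calc γ ^ 2 * (k₁ * k₁) / ((2 * lam + 1) * μf ε t) ≤ _ := step1
          _ = _ := step2
          _ ≤ _ := step3
          _ = E * (k₁ * (γ ^ 2 / ((2 * lam + 1) * μ0 t))) := by ring
        have hβle : β ≤ E * (k₁ * β) := by
          have h1 : β ≤ k₁ * β := le_mul_of_one_le_left hβ hk₁
          have h2 : k₁ * β ≤ E * (k₁ * β) :=
            le_mul_of_one_le_left (mul_nonneg (by linarith) hβ) hE1
          linarith
        have hεle : ε ≤ E * ε := le_mul_of_one_le_left hε.le hE1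
        rw [hK]
        linarith [hchain, hβle, hεle]
    -- squeeze
    set U : ℝ → ℝ := fun ε => Real.exp (ε * s) * ((1 + ε) ^ (lam + 1) * μ0 s + ε + ε * s)
      with hU
    have hUcont : ContinuousAt U 0 := by
      apply ContinuousAt.mul
      · exact (Real.continuous_exp.continuousAt).comp (by fun_prop)
      apply ContinuousAt.add
      apply ContinuousAt.add
      · apply ContinuousAt.mul _ continuousAt_const
        have : ContinuousAt (fun x : ℝ => x ^ (lam + 1)) (1 + 0) :=
          Real.continuousAt_rpow_const _ _ (Or.inl (by norm_num))
        exact this.comp (by fun_prop)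
      · exact continuousAt_id
      · exact continuousAt_id.mul continuousAt_const
    have hU0 : U 0 = μ0 s := by
      simp [hU, Real.exp_zero, Real.one_rpow]
    have hUt : Tendsto U (𝓝[>] (0:ℝ)) (𝓝 (μ0 s)) := by
      rw [← hU0]
      exact hUcont.continuousWithinAt.tendsto
    apply tendsto_of_tendsto_of_tendsto_of_le_of_le' tendsto_const_nhds hUt
    · filter_upwards [self_mem_nhdsWithin] with ε hε
      exact hlow ε hε s hs
    · filter_upwards [self_mem_nhdsWithin] with ε hε
      exact hupp ε hε s hs
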